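/- (Continuous-time G+D interlaced estimator, Proposition 2.) Let q be a positive integer, θ ∈ ℝ^q, φ : [0,∞) → ℝ^q continuous, bounded and interval excited, y(t) = φ(t)ᵀθ, γ > 0 a constant and γ_g : [0,∞) → ℝ continuous, positive and bounded. Let θ̂_g : [0,∞) → ℝ^q, Φ : [0,∞) → ℝ^{q×q}, θ̂ : [0,∞) → ℝ^q be differentiable and satisfy θ̂_g'(t) = γ_g(t)·φ(t)·(y(t) − φ(t)ᵀθ̂_g(t)) with θ̂_g(0) = θ_{g0}; Φ'(t) = −γ_g(t)·φ(t)φ(t)ᵀ·Φ(t) with Φ(0) = I_q; and θ̂'(t) = γ·Δ(t)·(Y(t) − Δ(t)·θ̂(t)) with θ̂(0) = θ₀, where Δ(t) := det(I_q − Φ(t)) and Y(t) := adj(I_q − Φ(t))·(θ̂_g(t) − Φ(t)θ_{g0}). Then θ̂(t) converges to θ exponentially fast, i.e., there exist M ≥ 0 and λ > 0 such that |θ̂(t) − θ| ≤ M·e^{−λt} for all t ≥ 0. -/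

import Mathlib

open Matrix

lemma dot_sq_le {q : ℕ} (v w : Fin q → ℝ) : (v ⬝ᵥ w)^2 ≤ (v ⬝ᵥ v) * (w ⬝ᵥ w) := by
  simpa [dotProduct, sq] using Finset.sum_mul_sq_le_sq_mul_sq Finset.univ v w

lemma dot_self_nonneg {q : ℕ} (v : Fin q → ℝ) : 0 ≤ v ⬝ᵥ v :=
  Finset.sum_nonneg fun i _ => mul_self_nonneg _

lemma hasDerivAt_dotSelf {q : ℕ} {f : ℝ → Fin q → ℝ} {f' : Fin q → ℝ} {t : ℝ}
    (hf : HasDerivAt f f' t) :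
    HasDerivAt (fun s => f s ⬝ᵥ f s) (2 * (f' ⬝ᵥ f t)) t := by
  have h := fun i => (hasDerivAt_pi.mp hf i)
  have H : HasDerivAt (fun s => ∑ i, f s i * f s i)
      (∑ i, (f' i * f t i + f t i * f' i)) t :=
    HasDerivAt.fun_sum (fun i _ => (h i).mul (h i))
  have e1 : (fun s => ∑ i, f s i * f s i) = fun s => f s ⬝ᵥ f s := by
    funext s; simp [dotProduct]
  have e2 : (∑ i, (f' i * f t i + f t i * f' i)) = 2 * (f' ⬝ᵥ f t) := by
    have : ∀ i ∈ Finset.univ, f' i * f t i + f t i * f' i = 2*(f' i * f t i) :=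
      fun i _ => by ring
    rw [Finset.sum_congr rfl this, dotProduct, Finset.mul_sum]
  rw [← e1, ← e2]; exact H

lemma hasDerivAt_mulVecFun {q : ℕ} {Φ : ℝ → Matrix (Fin q) (Fin q) ℝ}
    {D : Matrix (Fin q) (Fin q) ℝ} {t : ℝ}
    (h : ∀ i j, HasDerivAt (fun s => Φ s i j) (D i j) t) (c : Fin q → ℝ) :
    HasDerivAt (fun s => (Φ s).mulVec c) (D.mulVec c) t := by
  rw [hasDerivAt_pi]
  intro i
  have H : HasDerivAt (fun s => ∑ j, Φ s i j * c j) (∑ j, D i j * c j) t :=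
    HasDerivAt.fun_sum (fun j _ => (h i j).mul_const (c j))
  simpa [Matrix.mulVec, dotProduct] using H

lemma key_alg {q : ℕ} (g : ℝ) (u c : Fin q → ℝ) (A : Matrix (Fin q) (Fin q) ℝ) :
    ((-g • Matrix.vecMulVec u u) * A).mulVec c = (-g * (u ⬝ᵥ A.mulVec c)) • u := by
  rw [Matrix.smul_mul, Matrix.smul_mulVec]
  have : (Matrix.vecMulVec u u * A).mulVec c = (u ⬝ᵥ A.mulVec c) • u := by
    rw [← Matrix.mulVec_mulVec]
    ext i
    simp [Matrix.mulVec, dotProduct, Matrix.vecMulVec_apply, Finset.mul_sum, Finset.sum_mul,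
      mul_comm, mul_assoc, mul_left_comm]
  rw [this, smul_smul]

lemma intervalCS {f g : ℝ → ℝ} {a b : ℝ} (hab : a ≤ b)
    (hf : ContinuousOn f (Set.Icc a b)) (hg : ContinuousOn g (Set.Icc a b)) :
    (∫ s in a..b, f s * g s)^2 ≤ (∫ s in a..b, f s^2) * (∫ s in a..b, g s^2) := by
  have huIcc : Set.uIcc a b = Set.Icc a b := Set.uIcc_of_le hab
  have hif : IntervalIntegrable (fun s => f s ^2) MeasureTheory.volume a b :=
    (ContinuousOn.pow (by rwa [huIcc]) 2).intervalIntegrable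
  have hig : IntervalIntegrable (fun s => g s ^2) MeasureTheory.volume a b :=
    (ContinuousOn.pow (by rwa [huIcc]) 2).intervalIntegrable
  have hifg : IntervalIntegrable (fun s => f s * g s) MeasureTheory.volume a b :=
    (ContinuousOn.mul (by rwa [huIcc]) (by rwa [huIcc])).intervalIntegrable
  set A := ∫ s in a..b, f s^2 with hA
  set Bv := ∫ s in a..b, g s^2 with hB
  set C := ∫ s in a..b, f s * g s with hC
  have key : ∀ lam : ℝ, 0 ≤ A * (lam * lam) + (2*C) * lam + Bv := by
    intro lam
    have h0 : 0 ≤ ∫ s in a..b, (lam * f s + g s)^2 :=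
      intervalIntegral.integral_nonneg hab (fun s _ => sq_nonneg _)
    have hexp : (∫ s in a..b, (lam * f s + g s)^2)
        = A * (lam*lam) + (2*C) * lam + Bv := by
      have : (fun s => (lam * f s + g s)^2)
          = fun s => (lam*lam) * f s^2 + (2*lam) * (f s * g s) + g s^2 := by
        funext s; ring
      rw [this]
      rw [intervalIntegral.integral_add ((hif.const_mul (lam*lam)).add (hifg.const_mul (2*lam))) hig,
        intervalIntegral.integral_add (hif.const_mul (lam*lam)) (hifg.const_mul (2*lam)),
        intervalIntegral.integral_const_mul, intervalIntegral.integral_const_mul]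
      ring
    linarith [hexp ▸ h0]
  have hd := discrim_le_zero key
  rw [discrim] at hd
  nlinarith [hd]

lemma dot_self_nonneg' {q : ℕ} (v : Fin q → ℝ) : 0 ≤ v ⬝ᵥ v :=
  Finset.sum_nonneg fun i _ => mul_self_nonneg _

lemma gronwall_zero {F : Type*} [NormedAddCommGroup F] [NormedSpace ℝ F]
    {g g' : ℝ → F} {K b : ℝ} (hb : 0 ≤ b)
    (hd : ∀ t ∈ Set.Icc (0:ℝ) b, HasDerivAt g (g' t) t)
    (hbound : ∀ t ∈ Set.Icc (0:ℝ) b, ‖g' t‖ ≤ K * ‖g t‖) (h0 : g 0 = 0) : g b = 0 := by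
  have hcont : ContinuousOn g (Set.Icc 0 b) :=
    fun t ht => ((hd t ht).continuousAt).continuousWithinAt
  have hkey := norm_le_gronwallBound_of_norm_deriv_right_le (δ := 0) (K := K) (ε := 0)
    hcont (fun t ht => (hd t (Set.Ico_subset_Icc_self ht)).hasDerivWithinAt)
    (by simp [h0])
    (fun t ht => by simpa using hbound t (Set.Ico_subset_Icc_self ht))
  have hb' := hkey b (Set.right_mem_Icc.mpr hb)
  rw [gronwallBound_ε0_δ0] at hb'
  exact norm_le_zero_iff.mp hb'

lemma antitoneOn_of_hasDerivAt_nonpos {f f' : ℝ → ℝ} {a : ℝ}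
    (hd : ∀ t ∈ Set.Ici a, HasDerivAt f (f' t) t)
    (hnp : ∀ t ∈ Set.Ici a, f' t ≤ 0) : AntitoneOn f (Set.Ici a) := by
  apply antitoneOn_of_deriv_nonpos (convex_Ici a)
  · exact fun t ht => (hd t ht).continuousAt.continuousWithinAt
  · rw [interior_Ici]
    exact fun t ht => (hd t (Set.mem_Ici.mpr (le_of_lt ht))).differentiableAt.differentiableWithinAt
  · intro t ht
    rw [interior_Ici] at ht
    rw [(hd t (Set.mem_Ici.mpr ht.le)).deriv]
    exact hnp t (Set.mem_Ici.mpr ht.le)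

lemma det_pos_of_contract {q : ℕ} {ρ2 : ℝ} (hρ0 : 0 ≤ ρ2) (hρ1 : ρ2 < 1)
    {M : Matrix (Fin q) (Fin q) ℝ}
    (hM : ∀ x : Fin q → ℝ, (M *ᵥ x) ⬝ᵥ (M *ᵥ x) ≤ ρ2 * (x ⬝ᵥ x)) :
    0 < ((1 : Matrix (Fin q) (Fin q) ℝ) - M).det := by
  set f : ℝ → ℝ := fun s => ((1 : Matrix (Fin q) (Fin q) ℝ) - s • M).det with hf
  have hfc : Continuous f :=
    Continuous.matrix_det (continuous_const.sub (continuous_id.smul continuous_const))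
  have hf0 : f 0 = 1 := by simp [hf]
  have hne : ∀ s ∈ Set.Icc (0:ℝ) 1, f s ≠ 0 := by
    intro s hs h0
    obtain ⟨v, hv0, hveq⟩ := (Matrix.exists_mulVec_eq_zero_iff).mpr h0
    have hv : v = s • (M *ᵥ v) := by
      have h := hveq
      rw [Matrix.sub_mulVec, Matrix.one_mulVec, Matrix.smul_mulVec, sub_eq_zero] at h
      exact h
    have h1 : v ⬝ᵥ v = s^2 * ((M *ᵥ v) ⬝ᵥ (M *ᵥ v)) := by
      calc v ⬝ᵥ v = (s • (M *ᵥ v)) ⬝ᵥ (s • (M *ᵥ v)) := by rw [← hv]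
        _ = s^2 * ((M *ᵥ v) ⬝ᵥ (M *ᵥ v)) := by
            rw [smul_dotProduct, dotProduct_smul, smul_eq_mul, smul_eq_mul]; ring
    have hvv : 0 < v ⬝ᵥ v := by
      rcases (dot_self_nonneg' v).lt_or_eq with h | h
      · exact h
      · exact absurd (dotProduct_self_eq_zero.mp h.symm) hv0
    have hMv := hM v
    have hs2 : s^2 ≤ 1 := by nlinarith [hs.1, hs.2]
    have hρv : ρ2 * (v ⬝ᵥ v) < 1 * (v ⬝ᵥ v) := mul_lt_mul_of_pos_right hρ1 hvv
    have h2 : s^2 * ((M *ᵥ v) ⬝ᵥ (M *ᵥ v)) ≤ s^2 * (ρ2 * (v ⬝ᵥ v)) :=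
      mul_le_mul_of_nonneg_left hMv (sq_nonneg s)
    have h3 : s^2 * (ρ2 * (v ⬝ᵥ v)) ≤ 1 * (ρ2 * (v ⬝ᵥ v)) :=
      mul_le_mul_of_nonneg_right hs2 (mul_nonneg hρ0 hvv.le)
    nlinarith [h1, h2, h3, hρv]
  have hgoal : f 1 = ((1 : Matrix (Fin q) (Fin q) ℝ) - M).det := by simp [hf]
  by_contra hcon
  push_neg at hcon
  rw [← hgoal] at hcon
  have hf1 : f 1 < 0 := lt_of_le_of_ne hcon (hne 1 (Set.right_mem_Icc.mpr zero_le_one))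
  have : (0:ℝ) ∈ Set.Icc (f 1) (f 0) := ⟨hf1.le, by rw [hf0]; exact zero_le_one⟩
  obtain ⟨s, hs, hfs⟩ := intermediate_value_Icc' zero_le_one hfc.continuousOn this
  exact hne s hs hfs

lemma exists_det_lb {q : ℕ} {ρ2 : ℝ} (hρ0 : 0 ≤ ρ2) (hρ1 : ρ2 < 1) :
    ∃ c > (0:ℝ), ∀ M : Matrix (Fin q) (Fin q) ℝ,
      (∀ x : Fin q → ℝ, (M *ᵥ x) ⬝ᵥ (M *ᵥ x) ≤ ρ2 * (x ⬝ᵥ x)) →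
      c ≤ ((1 : Matrix (Fin q) (Fin q) ℝ) - M).det := by
  classical
  set S : Set (Fin q → Fin q → ℝ) :=
    {M | ∀ x : Fin q → ℝ, (Matrix.of M *ᵥ x) ⬝ᵥ (Matrix.of M *ᵥ x) ≤ ρ2 * (x ⬝ᵥ x)} with hS
  have hScont : ∀ x : Fin q → ℝ, Continuous
      (fun M : Fin q → Fin q → ℝ => (Matrix.of M *ᵥ x) ⬝ᵥ (Matrix.of M *ᵥ x)) := by
    intro x
    have : (fun M : Fin q → Fin q → ℝ => (Matrix.of M *ᵥ x) ⬝ᵥ (Matrix.of M *ᵥ x))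
        = fun M => ∑ i, (∑ j, M i j * x j) * (∑ j, M i j * x j) := by
      funext M; simp [Matrix.mulVec, dotProduct]
    rw [this]
    refine continuous_finset_sum _ fun i _ => Continuous.mul ?_ ?_ <;>
      exact continuous_finset_sum _ fun j _ =>
        ((continuous_apply_apply i j).mul continuous_const)
  have hSclosed : IsClosed S := by
    have : S = ⋂ x : Fin q → ℝ,
        {M : Fin q → Fin q → ℝ | (Matrix.of M *ᵥ x) ⬝ᵥ (Matrix.of M *ᵥ x) ≤ ρ2 * (x ⬝ᵥ x)} := by
      ext M; simp [hS, Set.mem_iInter]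
    rw [this]
    exact isClosed_iInter fun x => isClosed_le (hScont x) continuous_const
  have hSsub : S ⊆ Metric.closedBall 0 1 := by
    intro M hM
    rw [Metric.mem_closedBall, dist_zero_right]
    refine (pi_norm_le_iff_of_nonneg zero_le_one).mpr fun i =>
      (pi_norm_le_iff_of_nonneg zero_le_one).mpr fun j => ?_
    rw [Real.norm_eq_abs, abs_le_one_iff_mul_self_le_one]
    have h1 : (Matrix.of M *ᵥ Pi.single j 1) i = M i j := by
      rw [Matrix.mulVec_single]; simp
    have h2 : (Matrix.of M *ᵥ Pi.single j 1) i * (Matrix.of M *ᵥ Pi.single j 1) i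
        ≤ (Matrix.of M *ᵥ Pi.single j 1) ⬝ᵥ (Matrix.of M *ᵥ Pi.single j 1) := by
      rw [dotProduct]
      exact Finset.single_le_sum
        (f := fun k => (Matrix.of M *ᵥ Pi.single j 1) k * (Matrix.of M *ᵥ Pi.single j 1) k)
        (fun k _ => mul_self_nonneg _) (Finset.mem_univ i)
    rw [h1] at h2
    have h3 := hM (Pi.single j 1)
    have h4 : (Pi.single j 1 : Fin q → ℝ) ⬝ᵥ Pi.single j 1 = 1 := by
      rw [dotProduct_single]; simp
    rw [h4, mul_one] at h3
    linarith
  have hSbdd : Bornology.IsBounded S := Metric.isBounded_closedBall.subset hSsub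
  have hScompact : IsCompact S := Metric.isCompact_of_isClosed_isBounded hSclosed hSbdd
  have hSne : S.Nonempty := by
    refine ⟨0, fun x => ?_⟩
    have : (Matrix.of (0 : Fin q → Fin q → ℝ) *ᵥ x) = 0 := by
      ext i; simp [Matrix.mulVec, dotProduct]
    rw [this]
    simpa using mul_nonneg hρ0 (dot_self_nonneg' x)
  have hFc : Continuous (fun M : Fin q → Fin q → ℝ =>
      ((1 : Matrix (Fin q) (Fin q) ℝ) - Matrix.of M).det) :=
    Continuous.matrix_det (continuous_const.sub continuous_id)
  obtain ⟨M₀, hM₀S, hM₀min⟩ := hScompact.exists_isMinOn hSne hFc.continuousOn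
  refine ⟨((1 : Matrix (Fin q) (Fin q) ℝ) - Matrix.of M₀).det, ?_, ?_⟩
  · exact det_pos_of_contract hρ0 hρ1 hM₀S
  · intro M hM
    have hMS : (fun i j => M i j) ∈ S := by
      intro x
      have : Matrix.of (fun i j => M i j) = M := rfl
      rw [this]
      exact hM x
    have := hM₀min hMS
    exact this

lemma intInt_sum {q : ℕ} {a b : ℝ} (g : Fin q → ℝ → ℝ)
    (h : ∀ j, IntervalIntegrable (g j) MeasureTheory.volume a b) :
    IntervalIntegrable (fun s => ∑ j, g j s) MeasureTheory.volume a b := by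
  have h1 := IntervalIntegrable.sum (μ := MeasureTheory.volume) (a := a) (b := b)
    Finset.univ (f := g) (fun j _ => h j)
  have h2 : (fun s => ∑ j, g j s) = (∑ j, g j) := by
    funext s; simp
  rw [h2]; exact h1

set_option maxHeartbeats 1000000 in
lemma dot_intMatrix_swap {q : ℕ} (φ : ℝ → Fin q → ℝ) (t_c : ℝ) (z : Fin q → ℝ)
    (hij : ∀ i j : Fin q, IntervalIntegrable (fun s => z i * (φ s i * (φ s j * z j)))
      MeasureTheory.volume 0 t_c) :
    z ⬝ᵥ ((Matrix.of fun i j => ∫ s in (0:ℝ)..t_c, φ s i * φ s j) *ᵥ z)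
      = ∫ s in (0:ℝ)..t_c, (φ s ⬝ᵥ z)^2 := by
  calc z ⬝ᵥ ((Matrix.of fun i j => ∫ s in (0:ℝ)..t_c, φ s i * φ s j) *ᵥ z)
      = ∑ i, ∑ j, ∫ s in (0:ℝ)..t_c, z i * (φ s i * (φ s j * z j)) := by
        simp only [Matrix.mulVec, dotProduct, Matrix.of_apply]
        refine Finset.sum_congr rfl fun i _ => ?_
        rw [Finset.mul_sum]
        refine Finset.sum_congr rfl fun j _ => ?_
        rw [← intervalIntegral.integral_mul_const, ← intervalIntegral.integral_const_mul]
        congr 1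
        funext s
        ring
    _ = ∫ s in (0:ℝ)..t_c, ∑ i, ∑ j, z i * (φ s i * (φ s j * z j)) := by
        have hswap2 : (∫ s in (0:ℝ)..t_c, ∑ i, ∑ j, z i * (φ s i * (φ s j * z j)))
            = ∑ i, ∑ j, ∫ s in (0:ℝ)..t_c, z i * (φ s i * (φ s j * z j)) := by
          rw [intervalIntegral.integral_finset_sum
            (f := fun i s => ∑ j, z i * (φ s i * (φ s j * z j)))
            (fun i _ => intInt_sum _ (fun j => hij i j))]
          exact Finset.sum_congr rfl fun i _ =>
            intervalIntegral.integral_finset_sum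
              (f := fun j s => z i * (φ s i * (φ s j * z j)))
              (fun j _ => hij i j)
        exact hswap2.symm
    _ = ∫ s in (0:ℝ)..t_c, (φ s ⬝ᵥ z)^2 := by
        congr 1
        funext s
        rw [sq, dotProduct, Finset.sum_mul_sum]
        exact Finset.sum_congr rfl fun i _ => Finset.sum_congr rfl fun j _ => by ring

set_option maxHeartbeats 1000000 in
theorem gd_interlaced_estimator_continuous
    (q : ℕ) (hq : 0 < q) (θ : Fin q → ℝ) (φ : ℝ → Fin q → ℝ)
    (hφcont : ContinuousOn φ (Set.Ici 0))
    (hφbdd : ∃ B : ℝ, ∀ t ≥ (0 : ℝ), Real.sqrt (φ t ⬝ᵥ φ t) ≤ B)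
    -- interval excitation of φ
    (hIE : ∃ C_c : ℝ, 0 < C_c ∧ ∃ t_c : ℝ, 0 < t_c ∧
      (Matrix.of (fun i j => ∫ s in (0 : ℝ)..t_c, φ s i * φ s j)
        - C_c • (1 : Matrix (Fin q) (Fin q) ℝ)).PosSemidef)
    (y : ℝ → ℝ) (hy : ∀ t ≥ (0 : ℝ), y t = φ t ⬝ᵥ θ)
    (γ : ℝ) (hγ : 0 < γ)
    (γg : ℝ → ℝ) (hγgcont : ContinuousOn γg (Set.Ici 0))
    (hγgpos : ∀ t ≥ (0 : ℝ), 0 < γg t) (hγgbdd : ∃ B : ℝ, ∀ t ≥ (0 : ℝ), γg t ≤ B)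
    (θg : ℝ → Fin q → ℝ) (θg0 : Fin q → ℝ) (hθg0 : θg 0 = θg0)
    (hθg : ∀ t ≥ (0 : ℝ), HasDerivAt θg ((γg t * (y t - φ t ⬝ᵥ θg t)) • φ t) t)
    (Φ : ℝ → Matrix (Fin q) (Fin q) ℝ) (hΦ0 : Φ 0 = 1)
    (hΦ : ∀ t ≥ (0 : ℝ), ∀ i j, HasDerivAt (fun s => Φ s i j)
      (((-(γg t) • Matrix.vecMulVec (φ t) (φ t)) * Φ t) i j) t)
    (Δ : ℝ → ℝ) (hΔ : ∀ t, Δ t = ((1 : Matrix (Fin q) (Fin q) ℝ) - Φ t).det)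
    (Y : ℝ → Fin q → ℝ)
    (hY : ∀ t, Y t = ((1 : Matrix (Fin q) (Fin q) ℝ) - Φ t).adjugate.mulVec
      (θg t - (Φ t).mulVec θg0))
    (θhat : ℝ → Fin q → ℝ) (θ0 : Fin q → ℝ) (hθhat0 : θhat 0 = θ0)
    (hθhat : ∀ t ≥ (0 : ℝ), HasDerivAt θhat ((γ * Δ t) • (Y t - Δ t • θhat t)) t) :
    ∃ M : ℝ, 0 ≤ M ∧ ∃ lam > (0 : ℝ), ∀ t ≥ (0 : ℝ),
      Real.sqrt ((θhat t - θ) ⬝ᵥ (θhat t - θ)) ≤ M * Real.exp (-lam * t) := by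
  classical
  obtain ⟨B, hB⟩ := hφbdd
  obtain ⟨Bγ, hBγ⟩ := hγgbdd
  obtain ⟨C_c, hCc, t_c, htc, hPSD⟩ := hIE
  have hB0 : 0 ≤ B := le_trans (Real.sqrt_nonneg _) (hB 0 le_rfl)
  have hBγ0 : 0 < Bγ := lt_of_lt_of_le (hγgpos 0 le_rfl) (hBγ 0 le_rfl)
  have hφsq : ∀ t ≥ (0:ℝ), φ t ⬝ᵥ φ t ≤ B^2 := by
    intro t ht
    have h1 := hB t ht
    have h2 := Real.sq_sqrt (dot_self_nonneg (φ t))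
    nlinarith [Real.sqrt_nonneg (φ t ⬝ᵥ φ t)]
  have hφcomp : ∀ t ≥ (0:ℝ), ∀ i, |φ t i| ≤ B := by
    intro t ht i
    have h2 : (φ t i)*(φ t i) ≤ φ t ⬝ᵥ φ t := by
      rw [dotProduct]
      exact Finset.single_le_sum (f := fun k => φ t k * φ t k)
        (fun k _ => mul_self_nonneg _) (Finset.mem_univ i)
    have h3 := hφsq t ht
    nlinarith [abs_nonneg (φ t i), abs_mul_abs_self (φ t i)]
  -- derivative of t ↦ Φ t *ᵥ c
  have hΦv : ∀ (c : Fin q → ℝ), ∀ t ≥ (0:ℝ), HasDerivAt (fun s => (Φ s).mulVec c)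
      ((-(γg t) * (φ t ⬝ᵥ (Φ t).mulVec c)) • φ t) t := by
    intro c t ht
    have h := hasDerivAt_mulVecFun (fun i j => hΦ t ht i j) c
    rwa [key_alg] at h
  have hΦvc : ∀ (c : Fin q → ℝ), ContinuousOn (fun s => (Φ s).mulVec c) (Set.Ici 0) :=
    fun c t ht => ((hΦv c t ht).continuousAt).continuousWithinAt
  have hpc : ∀ (x : Fin q → ℝ), ContinuousOn (fun s => φ s ⬝ᵥ (Φ s).mulVec x) (Set.Ici 0) := by
    intro x
    have h : (fun s => φ s ⬝ᵥ (Φ s).mulVec x)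
        = fun s => ∑ i, φ s i * ((Φ s).mulVec x) i := rfl
    rw [h]
    exact continuousOn_finset_sum _ fun i _ =>
      (((continuous_apply i).comp_continuousOn hφcont)).mul
        ((continuous_apply i).comp_continuousOn (hΦvc x))
  -- Step A
  have hθgeq : ∀ t ≥ (0:ℝ), θg t - θ = (Φ t).mulVec (θg0 - θ) := by
    set G : ℝ → Fin q → ℝ := fun t => θg t - θ - (Φ t).mulVec (θg0 - θ) with hGdef
    have hGd : ∀ t ≥ (0:ℝ), HasDerivAt G ((-(γg t) * (φ t ⬝ᵥ G t)) • φ t) t := by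
      intro t ht
      have h1 : HasDerivAt (fun s => θg s - θ) ((-(γg t) * (φ t ⬝ᵥ (θg t - θ))) • φ t) t := by
        have h := (hθg t ht).sub_const θ
        refine h.congr_deriv ?_
        congr 1
        rw [hy t ht, dotProduct_sub]
        ring
      have h2 := hΦv (θg0 - θ) t ht
      have h3 := h1.sub h2
      refine h3.congr_deriv ?_
      have : φ t ⬝ᵥ G t = φ t ⬝ᵥ (θg t - θ) - φ t ⬝ᵥ (Φ t).mulVec (θg0 - θ) := by
        rw [hGdef]; exact dotProduct_sub _ _ _
      rw [this]
      ext i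
      simp only [Pi.smul_apply, Pi.sub_apply, smul_eq_mul]
      ring
    have hG0 : G 0 = 0 := by
      rw [hGdef]
      simp only [hθg0, hΦ0, Matrix.one_mulVec]
      abel
    intro t ht
    have hGt : G t = 0 := by
      apply gronwall_zero (g' := fun s => (-(γg s) * (φ s ⬝ᵥ G s)) • φ s)
        (K := Bγ * ((q : ℝ) * B * B)) ht (fun s hs => hGd s hs.1) ?_ hG0
      intro s hs
      have hs0 : (0:ℝ) ≤ s := hs.1
      have hφn : ‖φ s‖ ≤ B := by
        refine (pi_norm_le_iff_of_nonneg hB0).mpr fun i => ?_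
        rw [Real.norm_eq_abs]; exact hφcomp s hs0 i
      have hdot : |φ s ⬝ᵥ G s| ≤ (q : ℝ) * B * ‖G s‖ := by
        rw [dotProduct]
        calc |∑ i, φ s i * G s i| ≤ ∑ i, |φ s i * G s i| := Finset.abs_sum_le_sum_abs _ _
          _ ≤ ∑ _i : Fin q, B * ‖G s‖ := by
              refine Finset.sum_le_sum fun i _ => ?_
              rw [abs_mul]
              have h1 := hφcomp s hs0 i
              have h2 : |G s i| ≤ ‖G s‖ := by
                rw [← Real.norm_eq_abs]; exact norm_le_pi_norm (G s) i
              exact mul_le_mul h1 h2 (abs_nonneg _) hB0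
          _ = (q : ℝ) * B * ‖G s‖ := by
              rw [Finset.sum_const, Finset.card_univ, Fintype.card_fin, nsmul_eq_mul]; ring
      rw [norm_smul, Real.norm_eq_abs, abs_mul, abs_neg, abs_of_pos (hγgpos s hs0)]
      calc γg s * |φ s ⬝ᵥ G s| * ‖φ s‖ ≤ Bγ * ((q : ℝ) * B * ‖G s‖) * B := by
            refine mul_le_mul ?_ hφn (norm_nonneg _) ?_
            · exact mul_le_mul (hBγ s hs0) hdot (abs_nonneg _) (le_trans (hγgpos s hs0).le (hBγ s hs0))
            · positivity
        _ = Bγ * ((q : ℝ) * B * B) * ‖G s‖ := by ring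
    have := hGt
    rw [hGdef] at this
    exact sub_eq_zero.mp this

  -- Step B
  have hYeq : ∀ t ≥ (0:ℝ), Y t = Δ t • θ := by
    intro t ht
    have h2 := hθgeq t ht
    rw [Matrix.mulVec_sub] at h2
    have h1 : θg t - (Φ t).mulVec θg0 = ((1 : Matrix (Fin q) (Fin q) ℝ) - Φ t).mulVec θ := by
      rw [Matrix.sub_mulVec, Matrix.one_mulVec]
      have : θg t = θ + ((Φ t).mulVec θg0 - (Φ t).mulVec θ) := by
        rw [← h2]; abel
      rw [this]; abel
    rw [hY, h1, Matrix.mulVec_mulVec, Matrix.adjugate_mul, hΔ,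
      Matrix.smul_mulVec, Matrix.one_mulVec]
  -- Step C
  set e : ℝ → Fin q → ℝ := fun t => θhat t - θ with he
  set r : ℝ → ℝ := fun t => e t ⬝ᵥ e t with hr
  have hrnn : ∀ t, 0 ≤ r t := fun t => dot_self_nonneg _
  have hed : ∀ t ≥ (0:ℝ), HasDerivAt e ((-(γ * Δ t^2)) • e t) t := by
    intro t ht
    have h := (hθhat t ht).sub_const θ
    refine h.congr_deriv ?_
    rw [hYeq t ht]
    ext i
    simp only [he, Pi.smul_apply, Pi.sub_apply, smul_eq_mul]
    ring
  have hrd : ∀ t ≥ (0:ℝ), HasDerivAt r ((-(2 * γ * Δ t^2)) * r t) t := by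
    intro t ht
    have h := hasDerivAt_dotSelf (hed t ht)
    convert h using 1
    rw [hr, smul_dotProduct, smul_eq_mul]
    ring
  -- Step D
  have hcontract : ∀ (x : Fin q → ℝ),
      AntitoneOn (fun s => (Φ s).mulVec x ⬝ᵥ (Φ s).mulVec x) (Set.Ici 0) := by
    intro x
    apply antitoneOn_of_hasDerivAt_nonpos
      (f' := fun s => 2 * ((-(γg s) * (φ s ⬝ᵥ (Φ s).mulVec x)) * (φ s ⬝ᵥ (Φ s).mulVec x)))
    · intro t ht
      have h := hasDerivAt_dotSelf (hΦv x t ht)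
      convert h using 1
      rw [smul_dotProduct, smul_eq_mul]
    · intro t ht
      have h1 := sq_nonneg (φ t ⬝ᵥ (Φ t).mulVec x)
      have h2 := (hγgpos t ht).le
      nlinarith
  -- γmin
  obtain ⟨s₀, hs₀, hs₀min⟩ := isCompact_Icc.exists_isMinOn
    (Set.nonempty_Icc.mpr htc.le) (hγgcont.mono Set.Icc_subset_Ici_self)
  set γmin := γg s₀ with hγmindef
  have hγmin0 : 0 < γmin := hγgpos s₀ hs₀.1
  have hγminle : ∀ s ∈ Set.Icc (0:ℝ) t_c, γmin ≤ γg s := fun s hs => hs₀min hs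
  set K3 : ℝ := 1/γmin + t_c^2 * B^2 * (Bγ * B^2) with hK3def
  have hK30 : 0 < K3 := by positivity
  set ε₀ : ℝ := C_c / (C_c + K3) with hε₀def
  have hε₀0 : 0 < ε₀ := div_pos hCc (by linarith)
  have hε₀1 : ε₀ < 1 := (div_lt_one (by linarith)).mpr (by linarith)
  -- Step E
  have hstepE : ∀ x : Fin q → ℝ,
      (Φ t_c).mulVec x ⬝ᵥ (Φ t_c).mulVec x ≤ (1 - ε₀) * (x ⬝ᵥ x) := by
    intro x
    have hIcc : Set.uIcc (0:ℝ) t_c = Set.Icc 0 t_c := Set.uIcc_of_le htc.le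
    have hIccsub : Set.Icc (0:ℝ) t_c ⊆ Set.Ici 0 := fun s hs => hs.1
    have hv0 : (Φ 0).mulVec x = x := by rw [hΦ0, Matrix.one_mulVec]
    set E : ℝ := x ⬝ᵥ x - (Φ t_c).mulVec x ⬝ᵥ (Φ t_c).mulVec x with hEdef
    have hE0 : 0 ≤ E := by
      have h := hcontract x (Set.mem_Ici.mpr le_rfl) (Set.mem_Ici.mpr htc.le) htc.le
      simp only at h
      rw [hv0] at h
      rw [hEdef]
      linarith
    -- continuity facts
    have hpcont : ContinuousOn (fun s => φ s ⬝ᵥ (Φ s).mulVec x) (Set.Ici 0) := hpc x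
    have hγcontI : ContinuousOn γg (Set.Icc 0 t_c) := hγgcont.mono hIccsub
    have hpcontI : ContinuousOn (fun s => φ s ⬝ᵥ (Φ s).mulVec x) (Set.Icc 0 t_c) :=
      hpcont.mono hIccsub
    have hint_γp2 : IntervalIntegrable (fun s => γg s * (φ s ⬝ᵥ (Φ s).mulVec x)^2)
        MeasureTheory.volume 0 t_c := by
      apply ContinuousOn.intervalIntegrable
      rw [hIcc]
      exact hγcontI.mul (hpcontI.pow 2)
    have hintp2 : IntervalIntegrable (fun s => (φ s ⬝ᵥ (Φ s).mulVec x)^2)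
        MeasureTheory.volume 0 t_c := by
      apply ContinuousOn.intervalIntegrable
      rw [hIcc]
      exact hpcontI.pow 2
    -- FTC
    have hFTC : ∫ s in (0:ℝ)..t_c, (-(2 * (γg s * (φ s ⬝ᵥ (Φ s).mulVec x)^2)))
        = ((Φ t_c).mulVec x ⬝ᵥ (Φ t_c).mulVec x) - (x ⬝ᵥ x) := by
      have hd : ∀ s ∈ Set.uIcc (0:ℝ) t_c, HasDerivAt (fun u => (Φ u).mulVec x ⬝ᵥ (Φ u).mulVec x)
          (-(2 * (γg s * (φ s ⬝ᵥ (Φ s).mulVec x)^2))) s := by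
        rw [hIcc]
        intro s hs
        have h := hasDerivAt_dotSelf (hΦv x s hs.1)
        convert h using 1
        rw [smul_dotProduct, smul_eq_mul]
        ring
      have h0 : (fun s => -(2 * (γg s * (φ s ⬝ᵥ (Φ s).mulVec x)^2)))
          = fun s => (-2:ℝ) * (γg s * (φ s ⬝ᵥ (Φ s).mulVec x)^2) := funext fun s => by ring
      have hi : IntervalIntegrable (fun s => -(2 * (γg s * (φ s ⬝ᵥ (Φ s).mulVec x)^2)))
          MeasureTheory.volume 0 t_c := by
        rw [h0]; exact hint_γp2.const_mul (-2)
      have h := intervalIntegral.integral_eq_sub_of_hasDerivAt hd hi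
      rw [h, hv0]
    have hhalf : ∫ s in (0:ℝ)..t_c, γg s * (φ s ⬝ᵥ (Φ s).mulVec x)^2 = E / 2 := by
      have h0 : (fun s => -(2 * (γg s * (φ s ⬝ᵥ (Φ s).mulVec x)^2)))
          = fun s => (-2:ℝ) * (γg s * (φ s ⬝ᵥ (Φ s).mulVec x)^2) := funext fun s => by ring
      rw [h0, intervalIntegral.integral_const_mul] at hFTC
      rw [hEdef]
      linarith
    -- (i)
    have hI1 : ∫ s in (0:ℝ)..t_c, (φ s ⬝ᵥ (Φ s).mulVec x)^2 ≤ E / (2*γmin) := by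
      have hmono : ∫ s in (0:ℝ)..t_c, γmin * (φ s ⬝ᵥ (Φ s).mulVec x)^2
          ≤ ∫ s in (0:ℝ)..t_c, γg s * (φ s ⬝ᵥ (Φ s).mulVec x)^2 :=
        intervalIntegral.integral_mono_on htc.le (hintp2.const_mul γmin) hint_γp2
          (fun s hs => mul_le_mul_of_nonneg_right (hγminle s hs) (sq_nonneg _))
      rw [intervalIntegral.integral_const_mul, hhalf] at hmono
      rw [le_div_iff₀ (by positivity)]
      nlinarith
    -- (iii) IE inequality
    have hIEz : ∀ z : Fin q → ℝ, C_c * (z ⬝ᵥ z) ≤ ∫ s in (0:ℝ)..t_c, (φ s ⬝ᵥ z)^2 := by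
      intro z
      have h1 := hPSD.dotProduct_mulVec_nonneg z
      rw [star_trivial, Matrix.sub_mulVec, Matrix.smul_mulVec, Matrix.one_mulVec,
        dotProduct_sub, dotProduct_smul, smul_eq_mul] at h1
      have hij : ∀ i j : Fin q, IntervalIntegrable (fun s => z i * (φ s i * (φ s j * z j)))
          MeasureTheory.volume 0 t_c := by
        intro i j
        apply ContinuousOn.intervalIntegrable
        rw [hIcc]
        exact (continuousOn_const.mul (((continuous_apply i).comp_continuousOn
          (hφcont.mono hIccsub)).mul (((continuous_apply j).comp_continuousOn
          (hφcont.mono hIccsub)).mul continuousOn_const)))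
      have hswap : z ⬝ᵥ ((Matrix.of fun i j => ∫ s in (0:ℝ)..t_c, φ s i * φ s j) *ᵥ z)
          = ∫ s in (0:ℝ)..t_c, (φ s ⬝ᵥ z)^2 := dot_intMatrix_swap φ t_c z hij
      linarith
    -- (ii) increment bound
    have hSig : ∑ i, ∫ u in (0:ℝ)..t_c, γg u * (φ u i)^2 ≤ Bγ * B^2 * t_c := by
      have hint_i : ∀ i : Fin q, IntervalIntegrable (fun u => γg u * (φ u i)^2)
          MeasureTheory.volume 0 t_c := by
        intro i
        apply ContinuousOn.intervalIntegrable
        rw [hIcc]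
        exact hγcontI.mul (((continuous_apply i).comp_continuousOn (hφcont.mono hIccsub)).pow 2)
      rw [← intervalIntegral.integral_finset_sum (fun i _ => hint_i i)]
      have hbd : ∀ u ∈ Set.Icc (0:ℝ) t_c, ∑ i, γg u * (φ u i)^2 ≤ Bγ * B^2 := by
        intro u hu
        rw [← Finset.mul_sum]
        have h1 : ∑ i, (φ u i)^2 = φ u ⬝ᵥ φ u := by
          simp [dotProduct, sq]
        rw [h1]
        exact mul_le_mul (hBγ u hu.1) (hφsq u hu.1) (dot_self_nonneg _)
          (le_trans (hγgpos u hu.1).le (hBγ u hu.1))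
      have := intervalIntegral.integral_mono_on htc.le
        (intInt_sum _ (fun i => hint_i i))
        intervalIntegrable_const hbd
      rw [intervalIntegral.integral_const] at this
      calc ∫ u in (0:ℝ)..t_c, ∑ i, γg u * (φ u i)^2 ≤ (t_c - 0) • (Bγ * B^2) := this
        _ = Bγ * B^2 * t_c := by rw [smul_eq_mul]; ring
    have hw : ∀ s ∈ Set.Icc (0:ℝ) t_c,
        ((Φ t_c).mulVec x - (Φ s).mulVec x) ⬝ᵥ ((Φ t_c).mulVec x - (Φ s).mulVec x)
          ≤ (Bγ * B^2 * t_c) * (E/2) := by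
      intro s hs
      have hsubIci : Set.Icc s t_c ⊆ Set.Ici 0 :=
        fun u hu => le_trans hs.1 hu.1
      have huIccs : Set.uIcc s t_c = Set.Icc s t_c := Set.uIcc_of_le hs.2
      have hcomp : ∀ i, ((Φ t_c).mulVec x i - (Φ s).mulVec x i)^2
          ≤ (∫ u in (0:ℝ)..t_c, γg u * (φ u i)^2) * (E/2) := by
        intro i
        -- FTC for component i on [s, t_c]
        have hderiv_i : ∀ u ∈ Set.uIcc s t_c, HasDerivAt (fun w => (Φ w).mulVec x i)
            (-(γg u * (φ u i * (φ u ⬝ᵥ (Φ u).mulVec x)))) u := by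
          rw [huIccs]
          intro u hu
          have h := hasDerivAt_pi.mp (hΦv x u (hsubIci hu)) i
          refine h.congr_deriv ?_
          simp only [Pi.smul_apply, smul_eq_mul]
          ring
        have hint_di : IntervalIntegrable (fun u => -(γg u * (φ u i * (φ u ⬝ᵥ (Φ u).mulVec x))))
            MeasureTheory.volume s t_c := by
          apply ContinuousOn.intervalIntegrable
          rw [huIccs]
          exact ((hγgcont.mono hsubIci).mul (((continuous_apply i).comp_continuousOn
            (hφcont.mono hsubIci)).mul (hpcont.mono hsubIci))).neg
        have hFTCi := intervalIntegral.integral_eq_sub_of_hasDerivAt hderiv_i hint_di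
        -- Cauchy-Schwarz on [s, t_c]
        have hsqrtγ : ContinuousOn (fun u => Real.sqrt (γg u)) (Set.Icc s t_c) :=
          Real.continuous_sqrt.comp_continuousOn (hγgcont.mono hsubIci)
        have hCS := intervalCS (a := s) (b := t_c) hs.2
          (f := fun u => Real.sqrt (γg u) * φ u i)
          (g := fun u => Real.sqrt (γg u) * (φ u ⬝ᵥ (Φ u).mulVec x))
          (hsqrtγ.mul ((continuous_apply i).comp_continuousOn (hφcont.mono hsubIci)))
          (hsqrtγ.mul (hpcont.mono hsubIci))
        have heq1 : ∫ u in s..t_c, (Real.sqrt (γg u) * φ u i) * (Real.sqrt (γg u) * (φ u ⬝ᵥ (Φ u).mulVec x))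
            = ∫ u in s..t_c, γg u * (φ u i * (φ u ⬝ᵥ (Φ u).mulVec x)) := by
          apply intervalIntegral.integral_congr
          rw [huIccs]
          intro u hu
          have hγnn := (hγgpos u (hsubIci hu)).le
          simp only
          rw [show (Real.sqrt (γg u) * φ u i) * (Real.sqrt (γg u) * (φ u ⬝ᵥ (Φ u).mulVec x))
            = (Real.sqrt (γg u) * Real.sqrt (γg u)) * (φ u i * (φ u ⬝ᵥ (Φ u).mulVec x)) by ring,
            Real.mul_self_sqrt hγnn]
        have heq2 : ∫ u in s..t_c, (Real.sqrt (γg u) * φ u i)^2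
            = ∫ u in s..t_c, γg u * (φ u i)^2 := by
          apply intervalIntegral.integral_congr
          rw [huIccs]
          intro u hu
          have hγnn := (hγgpos u (hsubIci hu)).le
          simp only
          rw [mul_pow, Real.sq_sqrt hγnn]
        have heq3 : ∫ u in s..t_c, (Real.sqrt (γg u) * (φ u ⬝ᵥ (Φ u).mulVec x))^2
            = ∫ u in s..t_c, γg u * (φ u ⬝ᵥ (Φ u).mulVec x)^2 := by
          apply intervalIntegral.integral_congr
          rw [huIccs]
          intro u hu
          have hγnn := (hγgpos u (hsubIci hu)).le
          simp only
          rw [mul_pow, Real.sq_sqrt hγnn]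
        rw [heq1, heq2, heq3] at hCS
        -- extend integrals from [s,t_c] to [0,t_c]
        have hc1 : ContinuousOn (fun u => γg u * (φ u i)^2) (Set.Icc 0 t_c) :=
          hγcontI.mul (((continuous_apply i).comp_continuousOn (hφcont.mono hIccsub)).pow 2)
        have hc2 : ContinuousOn (fun u => γg u * (φ u ⬝ᵥ (Φ u).mulVec x)^2) (Set.Icc 0 t_c) :=
          hγcontI.mul (hpcontI.pow 2)
        have hsub1 : Set.Icc (0:ℝ) s ⊆ Set.Icc 0 t_c := Set.Icc_subset_Icc le_rfl hs.2
        have hsub2 : Set.Icc s t_c ⊆ Set.Icc 0 t_c := Set.Icc_subset_Icc hs.1 le_rfl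
        have hii1a : IntervalIntegrable (fun u => γg u * (φ u i)^2) MeasureTheory.volume 0 s := by
          apply ContinuousOn.intervalIntegrable
          rw [Set.uIcc_of_le hs.1]
          exact hc1.mono hsub1
        have hii1b : IntervalIntegrable (fun u => γg u * (φ u i)^2) MeasureTheory.volume s t_c := by
          apply ContinuousOn.intervalIntegrable
          rw [huIccs]
          exact hc1.mono hsub2
        have hii2a : IntervalIntegrable (fun u => γg u * (φ u ⬝ᵥ (Φ u).mulVec x)^2)
            MeasureTheory.volume 0 s := by
          apply ContinuousOn.intervalIntegrable
          rw [Set.uIcc_of_le hs.1]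
          exact hc2.mono hsub1
        have hii2b : IntervalIntegrable (fun u => γg u * (φ u ⬝ᵥ (Φ u).mulVec x)^2)
            MeasureTheory.volume s t_c := by
          apply ContinuousOn.intervalIntegrable
          rw [huIccs]
          exact hc2.mono hsub2
        have hnn1 : 0 ≤ ∫ u in (0:ℝ)..s, γg u * (φ u i)^2 :=
          intervalIntegral.integral_nonneg hs.1 (fun u hu =>
            mul_nonneg (hγgpos u hu.1).le (sq_nonneg _))
        have hnn2 : 0 ≤ ∫ u in (0:ℝ)..s, γg u * (φ u ⬝ᵥ (Φ u).mulVec x)^2 :=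
          intervalIntegral.integral_nonneg hs.1 (fun u hu =>
            mul_nonneg (hγgpos u hu.1).le (sq_nonneg _))
        have hb1 : ∫ u in s..t_c, γg u * (φ u i)^2 ≤ ∫ u in (0:ℝ)..t_c, γg u * (φ u i)^2 := by
          have hsplit := intervalIntegral.integral_add_adjacent_intervals hii1a hii1b
          linarith
        have hb2 : ∫ u in s..t_c, γg u * (φ u ⬝ᵥ (Φ u).mulVec x)^2 ≤ E/2 := by
          have hsplit := intervalIntegral.integral_add_adjacent_intervals hii2a hii2b
          rw [hhalf] at hsplit
          linarith
        have hnnb1 : 0 ≤ ∫ u in s..t_c, γg u * (φ u i)^2 :=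
          intervalIntegral.integral_nonneg hs.2 (fun u hu =>
            mul_nonneg (hγgpos u (hsubIci hu)).le (sq_nonneg _))
        have hnnb2 : 0 ≤ ∫ u in s..t_c, γg u * (φ u ⬝ᵥ (Φ u).mulVec x)^2 :=
          intervalIntegral.integral_nonneg hs.2 (fun u hu =>
            mul_nonneg (hγgpos u (hsubIci hu)).le (sq_nonneg _))
        have hnn01 : 0 ≤ ∫ u in (0:ℝ)..t_c, γg u * (φ u i)^2 := by linarith
        have hsq : ((Φ t_c).mulVec x i - (Φ s).mulVec x i)^2
            = (∫ u in s..t_c, γg u * (φ u i * (φ u ⬝ᵥ (Φ u).mulVec x)))^2 := by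
          rw [intervalIntegral.integral_neg] at hFTCi
          rw [← hFTCi]
          rw [neg_sq]
        calc ((Φ t_c).mulVec x i - (Φ s).mulVec x i)^2
            = (∫ u in s..t_c, γg u * (φ u i * (φ u ⬝ᵥ (Φ u).mulVec x)))^2 := hsq
          _ ≤ (∫ u in s..t_c, γg u * (φ u i)^2)
              * (∫ u in s..t_c, γg u * (φ u ⬝ᵥ (Φ u).mulVec x)^2) := hCS
          _ ≤ (∫ u in (0:ℝ)..t_c, γg u * (φ u i)^2) * (E/2) :=
              mul_le_mul hb1 hb2 hnnb2 hnn01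
      -- sum over components
      have hsum : ((Φ t_c).mulVec x - (Φ s).mulVec x) ⬝ᵥ ((Φ t_c).mulVec x - (Φ s).mulVec x)
          = ∑ i, ((Φ t_c).mulVec x i - (Φ s).mulVec x i)^2 := by
        simp [dotProduct, sq]
      rw [hsum]
      calc ∑ i, ((Φ t_c).mulVec x i - (Φ s).mulVec x i)^2
          ≤ ∑ i, (∫ u in (0:ℝ)..t_c, γg u * (φ u i)^2) * (E/2) :=
            Finset.sum_le_sum fun i _ => hcomp i
        _ = (∑ i, ∫ u in (0:ℝ)..t_c, γg u * (φ u i)^2) * (E/2) := by rw [Finset.sum_mul]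
        _ ≤ (Bγ * B^2 * t_c) * (E/2) :=
            mul_le_mul_of_nonneg_right hSig (by linarith)
    -- (iv) combine
    have hptwise : ∀ s ∈ Set.Icc (0:ℝ) t_c, (φ s ⬝ᵥ (Φ t_c).mulVec x)^2
        ≤ 2*(φ s ⬝ᵥ (Φ s).mulVec x)^2 + 2*(B^2 * ((Bγ*B^2*t_c)*(E/2))) := by
      intro s hs
      have hdec : φ s ⬝ᵥ (Φ t_c).mulVec x = (φ s ⬝ᵥ (Φ s).mulVec x)
          + φ s ⬝ᵥ ((Φ t_c).mulVec x - (Φ s).mulVec x) := by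
        rw [dotProduct_sub]; ring
      have hCSdot := dot_sq_le (φ s) ((Φ t_c).mulVec x - (Φ s).mulVec x)
      have hφφ := hφsq s hs.1
      have hwb := hw s hs
      have hwnn := dot_self_nonneg ((Φ t_c).mulVec x - (Φ s).mulVec x)
      have h2 : (φ s ⬝ᵥ ((Φ t_c).mulVec x - (Φ s).mulVec x))^2
          ≤ B^2 * ((Bγ*B^2*t_c)*(E/2)) :=
        le_trans hCSdot (mul_le_mul hφφ hwb hwnn (by positivity))
      rw [hdec]
      nlinarith [h2, sq_nonneg ((φ s ⬝ᵥ (Φ s).mulVec x)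
        - (φ s ⬝ᵥ ((Φ t_c).mulVec x - (Φ s).mulVec x)))]
    have hintvtc : IntervalIntegrable (fun s => (φ s ⬝ᵥ (Φ t_c).mulVec x)^2)
        MeasureTheory.volume 0 t_c := by
      apply ContinuousOn.intervalIntegrable
      rw [hIcc]
      have hcont' : ContinuousOn (fun s => φ s ⬝ᵥ (Φ t_c).mulVec x) (Set.Icc 0 t_c) := by
        have h : (fun s => φ s ⬝ᵥ (Φ t_c).mulVec x)
            = fun s => ∑ i, φ s i * (Φ t_c).mulVec x i := rfl
        rw [h]
        exact continuousOn_finset_sum _ fun i _ =>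
          ((continuous_apply i).comp_continuousOn (hφcont.mono hIccsub)).mul continuousOn_const
      exact hcont'.pow 2
    have hIfinal : C_c * ((Φ t_c).mulVec x ⬝ᵥ (Φ t_c).mulVec x) ≤ K3 * E := by
      have h1 := hIEz ((Φ t_c).mulVec x)
      have h2 := intervalIntegral.integral_mono_on htc.le hintvtc
        ((hintp2.const_mul 2).add intervalIntegrable_const) hptwise
      rw [intervalIntegral.integral_add (hintp2.const_mul 2) intervalIntegrable_const,
        intervalIntegral.integral_const_mul, intervalIntegral.integral_const, smul_eq_mul] at h2
      have h3 := hI1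
      have hK3E : 2*(E/(2*γmin)) + (t_c - 0) * (2*(B^2*((Bγ*B^2*t_c)*(E/2)))) = K3 * E := by
        rw [hK3def]
        field_simp
        ring
      have h4 := h1.trans h2
      have h5 : 2 * (∫ s in (0:ℝ)..t_c, (φ s ⬝ᵥ (Φ s).mulVec x)^2) ≤ 2 * (E/(2*γmin)) := by
        linarith [h3]
      have h6 := add_le_add h5
        (le_refl ((t_c - 0) * (2*(B^2*((Bγ*B^2*t_c)*(E/2))))))
      exact h4.trans (h6.trans_eq hK3E)
    have hxx := dot_self_nonneg x
    have hvtc : (Φ t_c).mulVec x ⬝ᵥ (Φ t_c).mulVec x = x ⬝ᵥ x - E := by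
      rw [hEdef]; ring
    have hCE : C_c * (x ⬝ᵥ x) ≤ (C_c + K3) * E := by
      rw [hvtc] at hIfinal
      nlinarith [hIfinal]
    have hEineq : ε₀ * (x ⬝ᵥ x) ≤ E := by
      rw [hε₀def, div_mul_eq_mul_div, div_le_iff₀ (by linarith : (0:ℝ) < C_c + K3)]
      nlinarith [hCE]
    rw [hvtc]
    nlinarith [hEineq]

  have hΦcontr : ∀ t ≥ t_c, ∀ x : Fin q → ℝ,
      (Φ t).mulVec x ⬝ᵥ (Φ t).mulVec x ≤ (1 - ε₀) * (x ⬝ᵥ x) := by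
    intro t ht x
    exact le_trans (hcontract x (Set.mem_Ici.mpr htc.le) (Set.mem_Ici.mpr (htc.le.trans ht)) ht)
      (hstepE x)
  obtain ⟨c₀, hc₀, hdetlb⟩ := exists_det_lb (q := q) (ρ2 := 1 - ε₀)
    (by linarith) (by linarith)
  have hΔlb : ∀ t ≥ t_c, c₀ ≤ Δ t := by
    intro t ht
    rw [hΔ]
    exact hdetlb (Φ t) (fun x => hΦcontr t ht x)
  -- Step G
  set lam : ℝ := γ * c₀^2 with hlamdef
  have hlam0 : 0 < lam := by positivity
  have hranti : AntitoneOn r (Set.Ici 0) := by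
    apply antitoneOn_of_hasDerivAt_nonpos (f' := fun t => (-(2 * γ * Δ t^2)) * r t) hrd
    intro t ht
    have h1 := hrnn t
    have h2 := sq_nonneg (Δ t)
    nlinarith [mul_nonneg (mul_nonneg hγ.le h2) h1]
  set u : ℝ → ℝ := fun t => r t * Real.exp (2*lam*(t - t_c)) with hudef
  have hexpd : ∀ t : ℝ, HasDerivAt (fun s => Real.exp (2*lam*(s - t_c)))
      (2*lam*Real.exp (2*lam*(t - t_c))) t := by
    intro t
    have h1 : HasDerivAt (fun s : ℝ => 2*lam*(s - t_c)) (2*lam) t := by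
      simpa using ((hasDerivAt_id t).sub_const t_c).const_mul (2*lam)
    have h2 := h1.exp
    simpa [mul_comm] using h2
  have huanti : AntitoneOn u (Set.Ici t_c) := by
    apply antitoneOn_of_hasDerivAt_nonpos
      (f' := fun t => (-(2 * γ * Δ t^2)) * r t * Real.exp (2*lam*(t - t_c))
        + r t * (2*lam*Real.exp (2*lam*(t - t_c))))
    · intro t ht
      exact (hrd t (le_trans htc.le ht)).mul (hexpd t)
    · intro t ht
      have hΔt := hΔlb t ht
      have hc2 : c₀^2 ≤ Δ t ^2 := by nlinarith
      have hrt := hrnn t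
      have hexp := (Real.exp_pos (2*lam*(t - t_c))).le
      have hle : 2*lam - 2*γ*Δ t^2 ≤ 0 := by rw [hlamdef]; nlinarith
      nlinarith [mul_nonneg hrt hexp]
  have hkey : ∀ t ≥ t_c, r t ≤ r 0 * Real.exp (-(2*lam*(t - t_c))) := by
    intro t ht
    have h1 : u t ≤ u t_c := huanti (Set.mem_Ici.mpr le_rfl) (Set.mem_Ici.mpr ht) ht
    have h2 : u t_c = r t_c := by simp [hudef]
    have h3 : r t_c ≤ r 0 := hranti (Set.mem_Ici.mpr le_rfl) (Set.mem_Ici.mpr htc.le) htc.le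
    have h4 : u t ≤ r 0 := by rw [h2] at h1; linarith
    have h5 : r t = u t * Real.exp (-(2*lam*(t - t_c))) := by
      rw [hudef]
      simp only []
      rw [mul_assoc, ← Real.exp_add]
      simp
    rw [h5]
    exact mul_le_mul_of_nonneg_right h4 (Real.exp_pos _).le
  refine ⟨Real.sqrt (r 0) * Real.exp (lam * t_c), by positivity, lam, hlam0, ?_⟩
  intro t ht
  show Real.sqrt (r t) ≤ _
  rcases le_or_gt t t_c with hcase | hcase
  · have h1 : r t ≤ r 0 := hranti (Set.mem_Ici.mpr le_rfl) (Set.mem_Ici.mpr ht) ht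
    have h2 : Real.sqrt (r t) ≤ Real.sqrt (r 0) := Real.sqrt_le_sqrt h1
    have h3 : (1:ℝ) ≤ Real.exp (lam * t_c) * Real.exp (-lam * t) := by
      rw [← Real.exp_add]
      refine Real.one_le_exp ?_
      nlinarith
    calc Real.sqrt (r t) ≤ Real.sqrt (r 0) := h2
      _ = Real.sqrt (r 0) * 1 := (mul_one _).symm
      _ ≤ Real.sqrt (r 0) * (Real.exp (lam * t_c) * Real.exp (-lam * t)) :=
          mul_le_mul_of_nonneg_left h3 (Real.sqrt_nonneg _)
      _ = Real.sqrt (r 0) * Real.exp (lam * t_c) * Real.exp (-lam * t) := by ring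
  · have h1 := hkey t hcase.le
    have h2 : Real.sqrt (r t) ≤ Real.sqrt (r 0 * Real.exp (-(2*lam*(t - t_c)))) :=
      Real.sqrt_le_sqrt h1
    have h3 : Real.sqrt (r 0 * Real.exp (-(2*lam*(t - t_c))))
        = Real.sqrt (r 0) * Real.exp (-(lam*(t - t_c))) := by
      rw [Real.sqrt_mul (hrnn 0)]
      congr 1
      have h4 : Real.exp (-(2*lam*(t - t_c))) = (Real.exp (-(lam*(t - t_c))))^2 := by
        rw [sq, ← Real.exp_add]; ring_nf
      rw [h4, Real.sqrt_sq (Real.exp_pos _).le]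
    have h5 : Real.sqrt (r 0) * Real.exp (-(lam*(t - t_c)))
        = Real.sqrt (r 0) * Real.exp (lam * t_c) * Real.exp (-lam * t) := by
      have hx : Real.exp (-(lam*(t - t_c))) = Real.exp (lam * t_c) * Real.exp (-lam * t) := by
        rw [← Real.exp_add]
        congr 1
        ring
      rw [hx, ← mul_assoc]
    calc Real.sqrt (r t) ≤ Real.sqrt (r 0 * Real.exp (-(2*lam*(t - t_c)))) := h2
      _ = Real.sqrt (r 0) * Real.exp (-(lam*(t - t_c))) := h3
      _ = Real.sqrt (r 0) * Real.exp (lam * t_c) * Real.exp (-lam * t) := h5
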